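/- Let t₁ and t₂ be closed symmetric sesquilinear forms in a Hilbert space H, both represented by the same self-adjoint operator T (i.e., t_i[u,v] = (Tu,v) for u ∈ dom T, v ∈ dom t_i, and dom T is dense in each form's Kreĭn space). If dom t₁ ⊆ dom t₂ then t₁ = t₂. -/

import Mathlib

open scoped InnerProductSpace

/-- Two closed symmetric forms represented by the same self-adjoint operator coincide.
Each closed form `tᵢ` is encoded by its form-domain Kreĭn space: a Hilbert space `Kᵢ`
(the Hilbert majorant, gap point `0`) continuously and injectively embedded in `H` via `jᵢ`,
together with a bounded, boundedly invertible, self-adjoint Gram operator `Gᵢ` so that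
`tᵢ[u,v] = ⟪Gᵢ u, v⟫` is the Kreĭn inner product.  `T` is the common self-adjoint
representing operator: `tᵢ[u,v] = (Tu, v)` for `u ∈ dom T`, `v ∈ dom tᵢ`, and `dom T` is
dense in each `Kᵢ`.  If `dom t₁ ⊆ dom t₂` then `t₁ = t₂` (equal domains and equal values). -/
theorem closed_forms_with_same_representing_operator_coincide
    {H K₁ K₂ : Type*}
    [NormedAddCommGroup H] [InnerProductSpace ℂ H] [CompleteSpace H]
    [NormedAddCommGroup K₁] [InnerProductSpace ℂ K₁] [CompleteSpace K₁]
    [NormedAddCommGroup K₂] [InnerProductSpace ℂ K₂] [CompleteSpace K₂]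
    (j₁ : K₁ →L[ℂ] H) (j₂ : K₂ →L[ℂ] H)
    (hj₁ : Function.Injective j₁) (hj₂ : Function.Injective j₂)
    (t₁ : K₁ → K₁ → ℂ) (t₂ : K₂ → K₂ → ℂ)
    (G₁ : K₁ ≃L[ℂ] K₁) (G₂ : K₂ ≃L[ℂ] K₂)
    (hG₁ : ∀ u v : K₁, t₁ u v = ⟪G₁ u, v⟫_ℂ)
    (hG₁sa : ∀ u v : K₁, ⟪G₁ u, v⟫_ℂ = ⟪u, G₁ v⟫_ℂ)
    (hG₂ : ∀ u v : K₂, t₂ u v = ⟪G₂ u, v⟫_ℂ)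
    (hG₂sa : ∀ u v : K₂, ⟪G₂ u, v⟫_ℂ = ⟪u, G₂ v⟫_ℂ)
    (T : H →ₗ.[ℂ] H) (hT : IsSelfAdjoint T)
    (hdom₁ : ∀ x : T.domain, (x : H) ∈ Set.range j₁)
    (hdom₂ : ∀ x : T.domain, (x : H) ∈ Set.range j₂)
    (hrep₁ : ∀ (x : T.domain) (u : K₁), j₁ u = (x : H) → ∀ v : K₁, t₁ u v = ⟪T x, j₁ v⟫_ℂ)
    (hrep₂ : ∀ (x : T.domain) (u : K₂), j₂ u = (x : H) → ∀ v : K₂, t₂ u v = ⟪T x, j₂ v⟫_ℂ)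
    (hdense₁ : Dense {u : K₁ | j₁ u ∈ T.domain})
    (hdense₂ : Dense {u : K₂ | j₂ u ∈ T.domain})
    (hsub : Set.range j₁ ⊆ Set.range j₂) :
    Set.range j₁ = Set.range j₂ ∧
    ∀ (u v : K₁) (u' v' : K₂), j₁ u = j₂ u' → j₁ v = j₂ v' → t₁ u v = t₂ u' v' := by
  classical
  -- the connecting map J := j₂⁻¹ ∘ j₁
  have hex : ∀ u : K₁, ∃ w : K₂, j₂ w = j₁ u := fun u => hsub ⟨u, rfl⟩
  choose Jf hJf using hex
  have Jlin : ∃ L : K₁ →ₗ[ℂ] K₂, ∀ u, L u = Jf u := by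
    refine ⟨{ toFun := Jf
              map_add' := fun u v => hj₂ (by simp [hJf])
              map_smul' := fun c u => hj₂ (by simp [hJf]) }, fun u => rfl⟩
  obtain ⟨L, hL⟩ := Jlin
  -- the graph of L is closed, hence L is continuous (closed graph theorem)
  have hgraphset : (L.graph : Set (K₁ × K₂)) = {p : K₁ × K₂ | j₂ p.2 = j₁ p.1} := by
    ext p
    constructor
    · intro hp
      have := (LinearMap.mem_graph_iff _ _).mp hp
      simp only [Set.mem_setOf_eq, this, hL, hJf]
    · intro hp
      refine (LinearMap.mem_graph_iff _ _).mpr ?_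
      have : p.2 = Jf p.1 := hj₂ (by rw [hJf]; exact hp)
      simp [this, hL]
  have hgraph : IsClosed (L.graph : Set (K₁ × K₂)) := by
    rw [hgraphset]
    exact isClosed_eq (j₂.continuous.comp continuous_snd) (j₁.continuous.comp continuous_fst)
  have Lcont : Continuous L := L.continuous_of_isClosed_graph hgraph
  set J : K₁ →L[ℂ] K₂ := ⟨L, Lcont⟩ with hJdef
  have hJ : ∀ u, j₂ (J u) = j₁ u := fun u => by
    show j₂ (L u) = j₁ u
    rw [hL]; exact hJf u
  -- A := G₂ ∘ J
  set A : K₁ →L[ℂ] K₂ := (G₂ : K₂ →L[ℂ] K₂).comp J with hAdef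
  have hA : ∀ u, A u = G₂ (J u) := fun _ => rfl
  -- key identity : ⟪A u, J v⟫ = ⟪G₁ u, v⟫ for all u, v
  have key : ∀ v u : K₁, ⟪A u, J v⟫_ℂ = ⟪G₁ u, v⟫_ℂ := by
    intro v
    have hf : Continuous fun u : K₁ => ⟪A u, J v⟫_ℂ :=
      Continuous.inner A.continuous continuous_const
    have hg : Continuous fun u : K₁ => ⟪G₁ u, v⟫_ℂ :=
      Continuous.inner ((G₁ : K₁ →L[ℂ] K₁).continuous) continuous_const
    have heq : Set.EqOn (fun u : K₁ => ⟪A u, J v⟫_ℂ) (fun u : K₁ => ⟪G₁ u, v⟫_ℂ)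
        {u : K₁ | j₁ u ∈ T.domain} := by
      intro u hu
      have hx : j₁ u ∈ T.domain := hu
      set x : T.domain := ⟨j₁ u, hx⟩ with hxdef
      have h1 : t₁ u v = ⟪T x, j₁ v⟫_ℂ := hrep₁ x u rfl v
      have h2 : t₂ (J u) (J v) = ⟪T x, j₂ (J v)⟫_ℂ := hrep₂ x (J u) (hJ u) (J v)
      have : t₁ u v = t₂ (J u) (J v) := by rw [h1, h2, hJ]
      simp only [hG₁, hG₂] at this
      simp only [hA]
      exact this.symm
    exact fun u => congrFun (hf.ext_on hdense₁ hg heq) u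
  -- J∗ ∘ A = G₁, hence A (and J) is bounded below
  have hadj : ∀ u : K₁, ContinuousLinearMap.adjoint J (A u) = G₁ u := by
    intro u
    refine ext_inner_right ℂ fun v => ?_
    rw [ContinuousLinearMap.adjoint_inner_left]
    exact key v u
  have hbelow : ∀ u : K₁, ‖u‖ ≤ (‖(G₁.symm : K₁ →L[ℂ] K₁)‖ * ‖ContinuousLinearMap.adjoint J‖) * ‖A u‖ := by
    intro u
    have h1 : ‖u‖ ≤ ‖(G₁.symm : K₁ →L[ℂ] K₁)‖ * ‖G₁ u‖ := by
      calc ‖u‖ = ‖(G₁.symm : K₁ →L[ℂ] K₁) (G₁ u)‖ := by simp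
        _ ≤ ‖(G₁.symm : K₁ →L[ℂ] K₁)‖ * ‖G₁ u‖ := (G₁.symm : K₁ →L[ℂ] K₁).le_opNorm _
    have h2 : ‖G₁ u‖ ≤ ‖ContinuousLinearMap.adjoint J‖ * ‖A u‖ := by
      rw [← hadj u]
      exact (ContinuousLinearMap.adjoint J).le_opNorm _
    calc ‖u‖ ≤ ‖(G₁.symm : K₁ →L[ℂ] K₁)‖ * ‖G₁ u‖ := h1
      _ ≤ ‖(G₁.symm : K₁ →L[ℂ] K₁)‖ * (‖ContinuousLinearMap.adjoint J‖ * ‖A u‖) := by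
          have := mul_le_mul_of_nonneg_left h2 (norm_nonneg (G₁.symm : K₁ →L[ℂ] K₁))
          exact this
      _ = (‖(G₁.symm : K₁ →L[ℂ] K₁)‖ * ‖ContinuousLinearMap.adjoint J‖) * ‖A u‖ := by ring
  -- hence the range of A is closed
  have hanti : AntilipschitzWith
      (‖(G₁.symm : K₁ →L[ℂ] K₁)‖ * ‖ContinuousLinearMap.adjoint J‖).toNNReal A := by
    refine A.antilipschitz_of_bound fun x => ?_
    refine le_trans (hbelow x) ?_
    gcongr
    exact Real.le_coe_toNNReal _
  have hclosedrange : IsClosed (Set.range A) :=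
    hanti.isClosed_range A.uniformContinuous
  -- the range of A is dense
  have hdenserange : Dense (Set.range A) := by
    have hbot : (LinearMap.range (A : K₁ →ₗ[ℂ] K₂))ᗮ = ⊥ := by
      rw [Submodule.eq_bot_iff]
      intro w hw
      have hw' : ∀ u : K₁, ⟪A u, w⟫_ℂ = 0 := fun u =>
        hw (A u) (LinearMap.mem_range_self _ u)
      -- ⟪G₂ v, w⟫ = 0 for all v in the dense set
      have hzero : ∀ v : K₂, ⟪G₂ v, w⟫_ℂ = 0 := by
        have hf : Continuous fun v : K₂ => ⟪G₂ v, w⟫_ℂ :=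
          Continuous.inner ((G₂ : K₂ →L[ℂ] K₂).continuous) continuous_const
        have heq : Set.EqOn (fun v : K₂ => ⟪G₂ v, w⟫_ℂ) (fun _ : K₂ => (0 : ℂ))
            {v : K₂ | j₂ v ∈ T.domain} := by
          intro v hv
          set x : T.domain := ⟨j₂ v, hv⟩ with hxdef
          obtain ⟨u, hu⟩ := hdom₁ x
          have hJux : j₂ (J u) = (x : H) := by rw [hJ]; exact hu
          have h1 : t₂ v w = ⟪T x, j₂ w⟫_ℂ := hrep₂ x v rfl w
          have h2 : t₂ (J u) w = ⟪T x, j₂ w⟫_ℂ := hrep₂ x (J u) hJux w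
          have h3 : t₂ (J u) w = 0 := by rw [hG₂]; exact hw' u
          show ⟪G₂ v, w⟫_ℂ = 0
          rw [← hG₂, h1, ← h2, h3]
        have := hf.ext_on hdense₂ continuous_const heq
        exact fun v => congrFun this v
      have : ⟪w, w⟫_ℂ = 0 := by
        have := hzero (G₂.symm w)
        simpa using this
      exact inner_self_eq_zero.mp this
    have : (LinearMap.range (A : K₁ →ₗ[ℂ] K₂)).topologicalClosure = ⊤ :=
      Submodule.topologicalClosure_eq_top_iff.mpr hbot
    have hd : Dense ((LinearMap.range (A : K₁ →ₗ[ℂ] K₂) : Submodule ℂ K₂) : Set K₂) :=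
      Submodule.dense_iff_topologicalClosure_eq_top.mpr this
    rw [LinearMap.coe_range] at hd
    exact hd
  -- A is surjective, hence J is surjective
  have hArange : Set.range A = Set.univ := by
    rw [← hclosedrange.closure_eq]
    exact hdenserange.closure_eq
  have hJsurj : Function.Surjective J := by
    intro w
    have : G₂ w ∈ Set.range A := hArange ▸ Set.mem_univ _
    obtain ⟨u, hu⟩ := this
    exact ⟨u, G₂.injective (by rw [← hA]; exact hu)⟩
  constructor
  · refine le_antisymm hsub ?_
    rintro _ ⟨w, rfl⟩
    obtain ⟨u, rfl⟩ := hJsurj w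
    exact ⟨u, (hJ u).symm⟩
  · intro u v u' v' hu hv
    have hu' : u' = J u := hj₂ (by rw [hJ]; exact hu.symm)
    have hv' : v' = J v := hj₂ (by rw [hJ]; exact hv.symm)
    subst hu' hv'
    rw [hG₁, hG₂, ← key v u, hA]
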